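/- (Variance problem) Let M ≥ 1 and let X be the Markov chain on E = {0,1,…,M} in which state 0 is absorbing, state M is reflecting (from M the chain moves to M−1 with probability 1), and from each i ∈ {1,…,M−1} the chain moves to i+1 or i−1 each with probability 1/2. For the variance problem, i.e. f(x) = x², g(x) = −x², h(x) = x, the mixed stopping strategy p̂ with p̂_0 = 1, p̂_i = 0 for i ∈ {1,…,M−1}, and p̂_M = 1/(M+1) is an equilibrium, and its equilibrium value function equals J_p̂(i) = iM/2 − (i/2)² = Var_i(X_{τ_p̂}) for every i ∈ {0,…,M}. -/

import Mathlib

/-!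
Analytic model of the time-inconsistent stopping framework of Christensen & Lindensjö,
"Time-inconsistent stopping, myopic adjustment & equilibrium stability".

A time-homogeneous Markov chain `X` on a finite state space `E` is encoded by its
transition matrix `P` (`P x y = P_x(X_1 = y)`).  A mixed stopping strategy is a vector
`p ∈ [0,1]^E`; the associated stopping time is `τ_p = min {n ≥ 0 : Y_n ≤ p_{X_n}}`,
where the `Y_n` are i.i.d. uniform randomization devices.  The quantity
`phi P p f x = E_x[f(X_{τ_p})]` (with the convention `f(X_{τ_p}) := lim_n f(X_n)` on
`{τ_p = ∞}`, the limit existing a.s. by absorption) is realized analytically, via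
dominated convergence, as the limit in `n` of the finite-horizon values
`phiSeq P p f n x = E_x[f(X_{τ_p ∧ n})]`, which satisfy the one-step recursion given
by the Markov property.  Likewise `step P v x = E_x[v(X_1)]`.
-/

open Filter

variable {E : Type*}

/-- One-step expectation operator: `step P v x = E_x[v(X_1)] = ∑ y, P x y * v y`. -/
noncomputable def step [Fintype E] (P : E → E → ℝ) (v : E → ℝ) (x : E) : ℝ :=
  ∑ y, P x y * v y

/-- Finite-horizon value `phiSeq P p f n x = E_x[f(X_{τ_p ∧ n})]`. -/
noncomputable def phiSeq [Fintype E] (P : E → E → ℝ) (p f : E → ℝ) : ℕ → E → ℝ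
  | 0 => f
  | n + 1 => fun x => p x * f x + (1 - p x) * step P (phiSeq P p f n) x

/-- `phi P p f x = E_x[f(X_{τ_p})]`, with the convention `f(X_{τ_p}) := lim_n f(X_n)`
on `{τ_p = ∞}`; by dominated convergence it is the limit of the finite-horizon values. -/
noncomputable def phi [Fintype E] (P : E → E → ℝ) (p f : E → ℝ) (x : E) : ℝ :=
  limUnder atTop fun n => phiSeq P p f n x

/-- `P` is a transition matrix (row-stochastic). -/
def IsTransition [Fintype E] (P : E → E → ℝ) : Prop :=
  (∀ x y, 0 ≤ P x y) ∧ ∀ x, ∑ y, P x y = 1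

/-- `a` is an absorbing state of the chain. -/
def IsAbsorbingState (P : E → E → ℝ) (a : E) : Prop := P a a = 1

/-- The chain is absorbing: from each starting state, some absorbing state is reached
with positive probability in a finite number of steps. -/
def IsAbsorbingChain [Fintype E] [DecidableEq E] (P : E → E → ℝ) : Prop :=
  ∀ x : E, ∃ (a : E) (n : ℕ), IsAbsorbingState P a ∧ 0 < ((Matrix.of P) ^ n) x a

/-- A mixed stopping strategy: a vector in `[0,1]^E`. -/
def IsStrategy (p : E → ℝ) : Prop := ∀ x, p x ∈ Set.Icc (0 : ℝ) 1

/-- `Kval P f h g p x q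
      = q f(x) + (1-q) E_x[φ_p(X_1)] + g (q h(x) + (1-q) E_x[ψ_p(X_1)])`. -/
noncomputable def Kval [Fintype E] (P : E → E → ℝ) (f h : E → ℝ) (g : ℝ → ℝ)
    (p : E → ℝ) (x : E) (q : ℝ) : ℝ :=
  q * f x + (1 - q) * step P (phi P p f) x
    + g (q * h x + (1 - q) * step P (phi P p h) x)

/-- `Jval P f h g p x = φ_p(x) + g(ψ_p(x)) = E_x[f(X_{τ_p})] + g(E_x[h(X_{τ_p})])`. -/
noncomputable def Jval [Fintype E] (P : E → E → ℝ) (f h : E → ℝ) (g : ℝ → ℝ)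
    (p : E → ℝ) (x : E) : ℝ :=
  phi P p f x + g (phi P p h x)

/-- Subgame perfect Nash equilibrium (condition (EqI)). -/
def IsEquilibrium [Fintype E] (P : E → E → ℝ) (f h : E → ℝ) (g : ℝ → ℝ)
    (p : E → ℝ) : Prop :=
  ∀ x : E, ∀ q ∈ Set.Icc (0 : ℝ) 1, Kval P f h g p x q ≤ Jval P f h g p x

section VPAux
open Filter Finset Topology

lemma sum_ite_one' {n : ℕ} (a : Fin n) (c : ℝ) (v : Fin n → ℝ)
    (cond : Fin n → Prop) [DecidablePred cond] (h : ∀ j, cond j ↔ j = a) :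
    ∑ j, (if cond j then c else 0) * v j = c * v a := by
  rw [Finset.sum_eq_single a]
  · rw [if_pos ((h a).2 rfl)]
  · intro b _ hb
    rw [if_neg (fun hc => hb ((h b).1 hc)), zero_mul]
  · intro ha; exact absurd (Finset.mem_univ a) ha

lemma sum_ite_two' {n : ℕ} (a b : Fin n) (hab : a ≠ b) (c : ℝ) (v : Fin n → ℝ)
    (cond : Fin n → Prop) [DecidablePred cond] (h : ∀ j, cond j ↔ j = a ∨ j = b) :
    ∑ j, (if cond j then c else 0) * v j = c * v a + c * v b := by
  have key : ∀ j, (if cond j then c else 0) * v j =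
      (if j = a then c * v j else 0) + (if j = b then c * v j else 0) := by
    intro j
    by_cases hj : cond j
    · rcases (h j).1 hj with rfl | rfl
      · rw [if_pos hj, if_pos rfl, if_neg hab, add_zero]
      · rw [if_pos hj, if_pos rfl, if_neg (fun hh => hab hh.symm), zero_add]
    · rw [if_neg hj, if_neg (fun h' => hj ((h j).2 (Or.inl h'))),
        if_neg (fun h' => hj ((h j).2 (Or.inr h'))), zero_mul, add_zero]
  simp only [key, Finset.sum_add_distrib, Finset.sum_ite_eq' Finset.univ,
    Finset.mem_univ, if_pos]

variable (M : ℕ) (P : Fin (M + 1) → Fin (M + 1) → ℝ)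
    (hP : ∀ i j : Fin (M + 1), P i j =
      if (i : ℕ) = 0 then (if j = i then 1 else 0)
      else if (i : ℕ) = M then (if (j : ℕ) + 1 = M then 1 else 0)
      else if (j : ℕ) = (i : ℕ) + 1 ∨ (j : ℕ) + 1 = (i : ℕ) then 1 / 2 else 0)

include hP in
lemma vp_step_zero (v : Fin (M+1) → ℝ) (i : Fin (M+1)) (h0 : (i : ℕ) = 0) :
    step P v i = v i := by
  have hPij : ∀ j, P i j = if j = i then (1:ℝ) else 0 := fun j => by
    rw [hP, if_pos h0]
  unfold step
  simp only [hPij]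
  rw [sum_ite_one' i 1 v _ (fun j => Iff.rfl), one_mul]

include hP in
lemma vp_step_top (hM : 1 ≤ M) (v : Fin (M+1) → ℝ) (i : Fin (M+1)) (hT : (i : ℕ) = M) :
    step P v i = v ⟨M - 1, by omega⟩ := by
  have h0 : (i : ℕ) ≠ 0 := by omega
  have hPij : ∀ j, P i j = if ((j : ℕ) + 1 = M) then (1:ℝ) else 0 := fun j => by
    rw [hP, if_neg h0, if_pos hT]
  unfold step
  simp only [hPij]
  rw [sum_ite_one' ⟨M - 1, by omega⟩ 1 v _ (fun j => by
    simp only [Fin.ext_iff, Fin.val_mk]; omega), one_mul]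

include hP in
lemma vp_step_mid (v : Fin (M+1) → ℝ) (i : Fin (M+1)) (h0 : (i : ℕ) ≠ 0) (hT : (i : ℕ) ≠ M) :
    step P v i = (v ⟨(i : ℕ) + 1, by omega⟩ + v ⟨(i : ℕ) - 1, by omega⟩) / 2 := by
  have hPij : ∀ j, P i j =
      if ((j : ℕ) = (i : ℕ) + 1 ∨ (j : ℕ) + 1 = (i : ℕ)) then (1/2 : ℝ) else 0 := fun j => by
    rw [hP, if_neg h0, if_neg hT]
  unfold step
  simp only [hPij]
  rw [sum_ite_two' ⟨(i : ℕ) + 1, by omega⟩ ⟨(i : ℕ) - 1, by omega⟩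
    (Fin.ne_of_val_ne (show (i : ℕ) + 1 ≠ (i : ℕ) - 1 by omega)) (1/2) v _ (fun j => by
      simp only [Fin.ext_iff, Fin.val_mk]; omega)]
  ring

/-- Abstract convergence of the value iteration to a fixed point, via a weighted
contraction estimate. -/
lemma phi_eq_of_contraction {E : Type*} [Fintype E] (Q : E → E → ℝ) (p f v w : E → ℝ)
    (θ : ℝ) (hθ0 : 0 ≤ θ) (hθ1 : θ < 1)
    (hPnn : ∀ x y, 0 ≤ Q x y) (hp1 : ∀ x, p x ≤ 1)
    (hw1 : ∀ x, 1 ≤ w x)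
    (hcontr : ∀ x, (1 - p x) * step Q w x ≤ θ * w x)
    (hv : ∀ x, v x = p x * f x + (1 - p x) * step Q v x) :
    ∀ x, phi Q p f x = v x := by
  classical
  set C : ℝ := ∑ x, |f x - v x| with hC
  have hC0 : 0 ≤ C := Finset.sum_nonneg fun x _ => abs_nonneg _
  have hCb : ∀ x, |f x - v x| ≤ C := fun x => by
    rw [hC]
    exact Finset.single_le_sum (f := fun y => |f y - v y|) (fun y _ => abs_nonneg _)
      (Finset.mem_univ x)
  have hw0 : ∀ x, 0 ≤ w x := fun x => le_trans zero_le_one (hw1 x)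
  have key : ∀ n x, |phiSeq Q p f n x - v x| ≤ C * θ ^ n * w x := by
    intro n
    induction n with
    | zero =>
      intro x
      have : phiSeq Q p f 0 x = f x := rfl
      rw [this, pow_zero, mul_one]
      calc |f x - v x| ≤ C := hCb x
        _ = C * 1 := (mul_one C).symm
        _ ≤ C * w x := mul_le_mul_of_nonneg_left (hw1 x) hC0
    | succ n ih =>
      intro x
      have hps : phiSeq Q p f (n+1) x = p x * f x + (1 - p x) * step Q (phiSeq Q p f n) x := rfl
      have hdiff : phiSeq Q p f (n+1) x - v x
          = (1 - p x) * (step Q (phiSeq Q p f n) x - step Q v x) := by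
        rw [hps, hv x]; ring
      have hstep : step Q (phiSeq Q p f n) x - step Q v x
          = ∑ y, Q x y * (phiSeq Q p f n y - v y) := by
        unfold step
        rw [← Finset.sum_sub_distrib]
        exact Finset.sum_congr rfl fun y _ => by ring
      have habs : |step Q (phiSeq Q p f n) x - step Q v x| ≤ C * θ ^ n * step Q w x := by
        rw [hstep]
        calc |∑ y, Q x y * (phiSeq Q p f n y - v y)|
            ≤ ∑ y, |Q x y * (phiSeq Q p f n y - v y)| := Finset.abs_sum_le_sum_abs _ _
          _ ≤ ∑ y, Q x y * (C * θ ^ n * w y) := by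
              refine Finset.sum_le_sum fun y _ => ?_
              rw [abs_mul, abs_of_nonneg (hPnn x y)]
              exact mul_le_mul_of_nonneg_left (ih y) (hPnn x y)
          _ = C * θ ^ n * step Q w x := by
              unfold step
              rw [Finset.mul_sum]
              exact Finset.sum_congr rfl fun y _ => by ring
      have h1p : 0 ≤ 1 - p x := by linarith [hp1 x]
      have hcn : 0 ≤ C * θ ^ n := mul_nonneg hC0 (pow_nonneg hθ0 n)
      calc |phiSeq Q p f (n+1) x - v x|
          = (1 - p x) * |step Q (phiSeq Q p f n) x - step Q v x| := by
            rw [hdiff, abs_mul, abs_of_nonneg h1p]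
        _ ≤ (1 - p x) * (C * θ ^ n * step Q w x) :=
            mul_le_mul_of_nonneg_left habs h1p
        _ = C * θ ^ n * ((1 - p x) * step Q w x) := by ring
        _ ≤ C * θ ^ n * (θ * w x) := mul_le_mul_of_nonneg_left (hcontr x) hcn
        _ = C * θ ^ (n+1) * w x := by ring
  intro x
  have htend0 : Tendsto (fun n => C * θ ^ n * w x) atTop (𝓝 0) := by
    have h1 : Tendsto (fun n : ℕ => θ ^ n) atTop (𝓝 0) :=
      tendsto_pow_atTop_nhds_zero_of_lt_one hθ0 hθ1
    have h2 : Tendsto (fun n : ℕ => C * θ ^ n * w x) atTop (𝓝 (C * 0 * w x)) :=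
      (h1.const_mul C).mul_const (w x)
    simpa using h2
  have htend : Tendsto (fun n => phiSeq Q p f n x - v x) atTop (𝓝 0) :=
    squeeze_zero_norm (fun n => by simpa using key n x) htend0
  have : Tendsto (fun n => phiSeq Q p f n x) atTop (𝓝 (v x)) := by
    have := htend.add_const (v x)
    simpa using this
  exact this.limUnder_eq

end VPAux


section VPAux2
open Filter Finset Topology

variable (M : ℕ) (P : Fin (M + 1) → Fin (M + 1) → ℝ)
    (hP : ∀ i j : Fin (M + 1), P i j =
      if (i : ℕ) = 0 then (if j = i then 1 else 0)
      else if (i : ℕ) = M then (if (j : ℕ) + 1 = M then 1 else 0)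
      else if (j : ℕ) = (i : ℕ) + 1 ∨ (j : ℕ) + 1 = (i : ℕ) then 1 / 2 else 0)
    (phat : Fin (M + 1) → ℝ)
    (hphat : ∀ i : Fin (M + 1), phat i =
      if (i : ℕ) = 0 then 1 else if (i : ℕ) = M then 1 / ((M : ℝ) + 1) else 0)

include hP hphat in
lemma vp_phi_linear (hM : 1 ≤ M) (f v : Fin (M + 1) → ℝ)
    (hv : ∀ x, v x = phat x * f x + (1 - phat x) * step P v x) :
    ∀ x, phi P phat f x = v x := by
  have hm1 : (1 : ℝ) ≤ (M : ℝ) := by exact_mod_cast hM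
  have hc : ((M - 1 : ℕ) : ℝ) = (M : ℝ) - 1 := by
    have := Nat.cast_sub (R := ℝ) hM; simpa using this
  refine phi_eq_of_contraction P phat f v
    (fun i => ((M : ℝ) ^ 2 + 1) - ((M : ℝ) - ((i : ℕ) : ℝ)) ^ 2)
    ((M : ℝ) ^ 2 / ((M : ℝ) ^ 2 + 1)) (by positivity) ?_ ?_ ?_ ?_ ?_ hv
  · rw [div_lt_one (by positivity)]; linarith
  · intro x y; rw [hP]; split_ifs <;> norm_num
  · intro x
    rw [hphat]
    split_ifs with h1 h2
    · exact le_refl 1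
    · rw [div_le_one (by linarith)]; linarith
    · norm_num
  · intro x
    have hx : ((x : ℕ) : ℝ) ≤ (M : ℝ) := by exact_mod_cast Fin.is_le x
    have hx0 : (0 : ℝ) ≤ ((x : ℕ) : ℝ) := Nat.cast_nonneg _
    nlinarith
  · intro x
    have hx : ((x : ℕ) : ℝ) ≤ (M : ℝ) := by exact_mod_cast Fin.is_le x
    have hx0 : (0 : ℝ) ≤ ((x : ℕ) : ℝ) := Nat.cast_nonneg _
    have h2 : (0 : ℝ) < (M : ℝ) ^ 2 + 1 := by positivity
    by_cases h0 : (x : ℕ) = 0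
    · have hp : phat x = 1 := by rw [hphat, if_pos h0]
      rw [hp]
      have hw : (0 : ℝ) ≤ ((M : ℝ) ^ 2 + 1) - ((M : ℝ) - ((x : ℕ) : ℝ)) ^ 2 := by nlinarith
      have hθ : (0 : ℝ) ≤ (M : ℝ) ^ 2 / ((M : ℝ) ^ 2 + 1) := by positivity
      calc (1 - 1) * step P (fun i => ((M : ℝ) ^ 2 + 1) - ((M : ℝ) - ((i : ℕ) : ℝ)) ^ 2) x
          = 0 := by ring
        _ ≤ _ := mul_nonneg hθ hw
    · by_cases hT : (x : ℕ) = M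
      · have hp : phat x = 1 / ((M : ℝ) + 1) := by rw [hphat, if_neg h0, if_pos hT]
        rw [hp, vp_step_top M P hP hM _ x hT]
        have hxm : ((x : ℕ) : ℝ) = (M : ℝ) := by rw [hT]
        simp only [Fin.val_mk]
        rw [hxm, hc]
        have hL : ((M : ℝ) ^ 2 + 1) - ((M : ℝ) - ((M : ℝ) - 1)) ^ 2 = (M : ℝ) ^ 2 := by ring
        have hR : (M : ℝ) ^ 2 / ((M : ℝ) ^ 2 + 1) * (((M : ℝ) ^ 2 + 1) - ((M : ℝ) - (M : ℝ)) ^ 2)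
            = (M : ℝ) ^ 2 := by field_simp; ring
        rw [hL, hR]
        have hq : (0 : ℝ) ≤ 1 / ((M : ℝ) + 1) := by positivity
        nlinarith [sq_nonneg (M : ℝ)]
      · have hp : phat x = 0 := by rw [hphat, if_neg h0, if_neg hT]
        rw [hp, vp_step_mid M P hP _ x h0 hT]
        simp only [Fin.val_mk]
        have h1x : 1 ≤ (x : ℕ) := by omega
        have hsub : (((x : ℕ) - 1 : ℕ) : ℝ) = ((x : ℕ) : ℝ) - 1 := by
          have := Nat.cast_sub (R := ℝ) h1x; simpa using this
        rw [hsub]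
        push_cast
        rw [div_mul_eq_mul_div, le_div_iff₀ h2]
        nlinarith [sq_nonneg ((M : ℝ) - ((x : ℕ) : ℝ))]

end VPAux2


/-- Section 6.2 (the variance problem): for the random walk on `{0,1,…,M}` with `0`
absorbing and `M` reflecting, and the variance problem `f(x) = x²`, `g(x) = -x²`,
`h(x) = x`, the strategy `p̂ = (1,0,…,0,1/(M+1))` is an equilibrium with equilibrium
value function `J_p̂(i) = iM/2 - (i/2)² (= Var_i(X_{τ_p̂}))`. -/
theorem variance_problem_equilibrium (M : ℕ) (hM : 1 ≤ M)
    (P : Fin (M + 1) → Fin (M + 1) → ℝ)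
    (hP : ∀ i j : Fin (M + 1), P i j =
      if (i : ℕ) = 0 then (if j = i then 1 else 0)
      else if (i : ℕ) = M then (if (j : ℕ) + 1 = M then 1 else 0)
      else if (j : ℕ) = (i : ℕ) + 1 ∨ (j : ℕ) + 1 = (i : ℕ) then 1 / 2 else 0)
    (phat : Fin (M + 1) → ℝ)
    (hphat : ∀ i : Fin (M + 1), phat i =
      if (i : ℕ) = 0 then 1 else if (i : ℕ) = M then 1 / ((M : ℝ) + 1) else 0) :
    IsEquilibrium P (fun i => ((i : ℕ) : ℝ) ^ 2) (fun i => ((i : ℕ) : ℝ))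
        (fun t => -t ^ 2) phat ∧
      ∀ i : Fin (M + 1),
        Jval P (fun i => ((i : ℕ) : ℝ) ^ 2) (fun i => ((i : ℕ) : ℝ))
            (fun t => -t ^ 2) phat i
          = ((i : ℕ) : ℝ) * M / 2 - (((i : ℕ) : ℝ) / 2) ^ 2 := by
  have hm1 : (1 : ℝ) ≤ (M : ℝ) := by exact_mod_cast hM
  have hc : ((M - 1 : ℕ) : ℝ) = (M : ℝ) - 1 := by
    have := Nat.cast_sub (R := ℝ) hM; simpa using this
  have Hf : phi P phat (fun i => ((i : ℕ) : ℝ) ^ 2)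
      = fun i : Fin (M + 1) => (M : ℝ) * ((i : ℕ) : ℝ) / 2 := by
    funext x
    refine vp_phi_linear M P hP phat hphat hM (fun i => ((i : ℕ) : ℝ) ^ 2)
      (fun i => (M : ℝ) * ((i : ℕ) : ℝ) / 2) ?_ x
    intro y
    by_cases h0 : (y : ℕ) = 0
    · have hp : phat y = 1 := by rw [hphat, if_pos h0]
      have hy : ((y : ℕ) : ℝ) = 0 := by rw [h0]; norm_num
      rw [hp]; rw [hy]; ring
    · by_cases hT : (y : ℕ) = M
      · have hp : phat y = 1 / ((M : ℝ) + 1) := by rw [hphat, if_neg h0, if_pos hT]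
        rw [hp, vp_step_top M P hP hM _ y hT]
        simp only [Fin.val_mk]
        have hy : ((y : ℕ) : ℝ) = (M : ℝ) := by rw [hT]
        rw [hy, hc]
        have hpos : (0 : ℝ) < (M : ℝ) + 1 := by linarith
        field_simp
        ring
      · have hp : phat y = 0 := by rw [hphat, if_neg h0, if_neg hT]
        rw [hp, vp_step_mid M P hP _ y h0 hT]
        simp only [Fin.val_mk]
        have h1y : 1 ≤ (y : ℕ) := by omega
        have hsub : (((y : ℕ) - 1 : ℕ) : ℝ) = ((y : ℕ) : ℝ) - 1 := by
          have := Nat.cast_sub (R := ℝ) h1y; simpa using this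
        rw [hsub]
        push_cast
        ring
  have Hh : phi P phat (fun i => ((i : ℕ) : ℝ))
      = fun i : Fin (M + 1) => ((i : ℕ) : ℝ) / 2 := by
    funext x
    refine vp_phi_linear M P hP phat hphat hM (fun i => ((i : ℕ) : ℝ))
      (fun i => ((i : ℕ) : ℝ) / 2) ?_ x
    intro y
    by_cases h0 : (y : ℕ) = 0
    · have hp : phat y = 1 := by rw [hphat, if_pos h0]
      have hy : ((y : ℕ) : ℝ) = 0 := by rw [h0]; norm_num
      rw [hp]; rw [hy]; ring
    · by_cases hT : (y : ℕ) = M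
      · have hp : phat y = 1 / ((M : ℝ) + 1) := by rw [hphat, if_neg h0, if_pos hT]
        rw [hp, vp_step_top M P hP hM _ y hT]
        simp only [Fin.val_mk]
        have hy : ((y : ℕ) : ℝ) = (M : ℝ) := by rw [hT]
        rw [hy, hc]
        have hpos : (0 : ℝ) < (M : ℝ) + 1 := by linarith
        field_simp
        ring
      · have hp : phat y = 0 := by rw [hphat, if_neg h0, if_neg hT]
        rw [hp, vp_step_mid M P hP _ y h0 hT]
        simp only [Fin.val_mk]
        have h1y : 1 ≤ (y : ℕ) := by omega
        have hsub : (((y : ℕ) - 1 : ℕ) : ℝ) = ((y : ℕ) : ℝ) - 1 := by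
          have := Nat.cast_sub (R := ℝ) h1y; simpa using this
        rw [hsub]
        push_cast
        ring
  constructor
  · intro x q hq
    obtain ⟨hq0, hq1⟩ := hq
    have hx : ((x : ℕ) : ℝ) ≤ (M : ℝ) := by exact_mod_cast Fin.is_le x
    have hx0 : (0 : ℝ) ≤ ((x : ℕ) : ℝ) := Nat.cast_nonneg _
    simp only [Kval, Jval, Hf, Hh]
    by_cases h0 : (x : ℕ) = 0
    · rw [vp_step_zero M P hP _ x h0, vp_step_zero M P hP _ x h0]
      have hy : ((x : ℕ) : ℝ) = 0 := by rw [h0]; norm_num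
      rw [hy]
      norm_num
    · by_cases hT : (x : ℕ) = M
      · rw [vp_step_top M P hP hM _ x hT, vp_step_top M P hP hM _ x hT]
        simp only [Fin.val_mk]
        have hy : ((x : ℕ) : ℝ) = (M : ℝ) := by rw [hT]
        rw [hy, hc]
        nlinarith [sq_nonneg (q * (M : ℝ) + (1 - q) * (((M : ℝ) - 1) / 2) - (M : ℝ) / 2)]
      · rw [vp_step_mid M P hP _ x h0 hT, vp_step_mid M P hP _ x h0 hT]
        simp only [Fin.val_mk]
        have h1y : 1 ≤ (x : ℕ) := by omega
        have hsub : (((x : ℕ) - 1 : ℕ) : ℝ) = ((x : ℕ) : ℝ) - 1 := by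
          have := Nat.cast_sub (R := ℝ) h1y; simpa using this
        rw [hsub]
        push_cast
        nlinarith [mul_nonneg (mul_nonneg hq0 (sub_nonneg.2 hx)) hx0,
          mul_nonneg (mul_nonneg hq0 hq0) (sq_nonneg ((x : ℕ) : ℝ))]
  · intro i
    simp only [Jval, Hf, Hh]
    ring
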